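/- Let F : ℝ^ν → [0,∞) be C³, vanishing on the compact submanifold N ⊂ ℝ^ν, and suppose that for every y ∈ N and nonzero v ∈ (T_y N)^⊥, D²F(y)[v,v] > 0. Define G(y) := |∇F(y)|². Then G vanishes on N and for every y ∈ N and nonzero v ∈ (T_y N)^⊥, D²G(y)[v,v] > 0. -/

import Mathlib

open Metric InnerProductSpace

/-- The real inner product as a continuous linear map (genuinely ℝ-bilinear). -/
noncomputable def innerCLM (F : Type*) [NormedAddCommGroup F] [InnerProductSpace ℝ F] :
    F →L[ℝ] F →L[ℝ] ℝ :=
  LinearMap.mkContinuous₂ (innerₗ F) 1 (fun x y => by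
    simpa using abs_real_inner_le_norm x y)

@[simp] lemma innerCLM_apply {F : Type*} [NormedAddCommGroup F] [InnerProductSpace ℝ F]
    (x y : F) : innerCLM F x y = ⟪x, y⟫_ℝ := by
  simp [innerCLM]


/-- If `F : ℝ^ν → [0,∞)` is `C³`, vanishes on the compact submanifold `N` and
satisfies `D²F(y)[v,v] > 0` for every `y ∈ N` and every nonzero normal vector
`v ∈ (T_y N)^⊥`, then `G(y) := |∇F(y)|²` also vanishes on `N` and satisfies
`D²G(y)[v,v] > 0` for every `y ∈ N` and nonzero normal `v`. -/
theorem gradient_squared_nondegenerate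
    {ν : ℕ} (N : Set (EuclideanSpace ℝ (Fin ν)))
    (hN : IsCompact N)
    (T : EuclideanSpace ℝ (Fin ν) → Submodule ℝ (EuclideanSpace ℝ (Fin ν)))
    (F : EuclideanSpace ℝ (Fin ν) → ℝ)
    (hF : ContDiff ℝ 3 F)
    (hFnonneg : ∀ z, 0 ≤ F z)
    (hF0 : ∀ y ∈ N, F y = 0)
    (hD2F : ∀ y ∈ N, ∀ v ∈ (T y)ᗮ, v ≠ 0 →
      0 < iteratedFDeriv ℝ 2 F y ![v, v]) :
    (∀ y ∈ N, ‖gradient F y‖ ^ 2 = 0) ∧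
    (∀ y ∈ N, ∀ v ∈ (T y)ᗮ, v ≠ 0 →
      0 < iteratedFDeriv ℝ 2 (fun y => ‖gradient F y‖ ^ 2) y ![v, v]) := by
  classical
  have hgrad0 : ∀ y ∈ N, gradient F y = 0 := by
    intro y hy
    have hmin : IsLocalMin F y :=
      Filter.Eventually.of_forall fun z => by rw [hF0 y hy]; exact hFnonneg z
    have : fderiv ℝ F y = 0 := hmin.fderiv_eq_zero
    simp [gradient, this]
  set g : EuclideanSpace ℝ (Fin ν) → EuclideanSpace ℝ (Fin ν) :=
    fun x => gradient F x with hgdef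
  have hfd : ContDiff ℝ 2 (fderiv ℝ F) := hF.fderiv_right (by norm_num)
  have hg : ContDiff ℝ 2 g :=
    (toDual ℝ (EuclideanSpace ℝ (Fin ν))).symm.contDiff.comp hfd
  set B : EuclideanSpace ℝ (Fin ν) → (EuclideanSpace ℝ (Fin ν) →L[ℝ] EuclideanSpace ℝ (Fin ν)) :=
    fun x => fderiv ℝ g x with hBdef
  have hB : ContDiff ℝ 1 B := hg.fderiv_right (by norm_num)
  have hgy : ∀ x, HasFDerivAt g (B x) x := fun x =>
    ((hg.differentiable two_ne_zero) x).hasFDerivAt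
  refine ⟨fun y hy => by simp [hgrad0 y hy], ?_⟩
  intro y hy v hv hv0
  -- relate B with D²F
  have hFdg : fderiv ℝ F = fun x => innerCLM (EuclideanSpace ℝ (Fin ν)) (g x) := by
    funext x
    ext w
    simp [hgdef, gradient, toDual_symm_apply]
  have hBF : HasFDerivAt (fderiv ℝ F)
      ((innerCLM (EuclideanSpace ℝ (Fin ν))).comp (B y)) y := by
    rw [hFdg]
    exact ((innerCLM (EuclideanSpace ℝ (Fin ν))).hasFDerivAt).comp y (hgy y)
  have hD2 : iteratedFDeriv ℝ 2 F y ![v, v] = ⟪B y v, v⟫_ℝ := by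
    rw [iteratedFDeriv_two_apply, hBF.fderiv]
    simp
  have hBv : B y v ≠ 0 := by
    intro h
    have := hD2F y hy v hv hv0
    rw [hD2, h] at this
    simp at this
  -- second derivative of G
  have hGeq : (fun x : EuclideanSpace ℝ (Fin ν) => ‖gradient F x‖ ^ 2)
      = fun x => ⟪g x, g x⟫_ℝ := by
    funext x
    rw [real_inner_self_eq_norm_sq]
  set Φ : EuclideanSpace ℝ (Fin ν) → (EuclideanSpace ℝ (Fin ν) →L[ℝ] ℝ) :=
    fun x => (2:ℝ) • ((innerCLM (EuclideanSpace ℝ (Fin ν)) (g x)).comp (B x)) with hΦdef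
  have hG' : ∀ x, HasFDerivAt (fun x => ⟪g x, g x⟫_ℝ) (Φ x) x := by
    intro x
    have h1 := (hgy x).inner ℝ (hgy x)
    refine h1.congr_fderiv (Eq.symm ?_)
    ext w
    simp [hΦdef, two_mul]
    exact real_inner_comm _ _
  have hfderivG : fderiv ℝ (fun x => ⟪g x, g x⟫_ℝ) = Φ := funext fun x => (hG' x).fderiv
  have hc : HasFDerivAt (fun x => innerCLM (EuclideanSpace ℝ (Fin ν)) (g x))
      ((innerCLM (EuclideanSpace ℝ (Fin ν))).comp (B y)) y :=
    ((innerCLM (EuclideanSpace ℝ (Fin ν))).hasFDerivAt).comp y (hgy y)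
  have hd : HasFDerivAt B (fderiv ℝ B y) y := ((hB.differentiable one_ne_zero) y).hasFDerivAt
  have hΨ := hc.clm_comp hd
  have hΦ' : HasFDerivAt Φ ((2:ℝ) •
      ((ContinuousLinearMap.compL ℝ (EuclideanSpace ℝ (Fin ν)) (EuclideanSpace ℝ (Fin ν)) ℝ
          (innerCLM (EuclideanSpace ℝ (Fin ν)) (g y))).comp (fderiv ℝ B y) +
        ((ContinuousLinearMap.compL ℝ (EuclideanSpace ℝ (Fin ν)) (EuclideanSpace ℝ (Fin ν)) ℝ).flip
          (B y)).comp
          ((innerCLM (EuclideanSpace ℝ (Fin ν))).comp (B y)))) y := hΨ.const_smul (2:ℝ)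
  have hgy0 : g y = 0 := hgrad0 y hy
  have key : iteratedFDeriv ℝ 2 (fun x => ⟪g x, g x⟫_ℝ) y ![v, v]
      = 2 * ⟪B y v, B y v⟫_ℝ := by
    rw [iteratedFDeriv_two_apply, hfderivG, hΦ'.fderiv]
    simp [hgy0]
  rw [hGeq, key]
  have : (0:ℝ) < ⟪B y v, B y v⟫_ℝ := by
    rw [real_inner_self_eq_norm_sq]
    exact pow_pos (norm_pos_iff.mpr hBv) 2
  linarith
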